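/- Let G be a group and ⪯₁, ⪯₂ two left-invariant preorders on G. Then ⪯₂ refines ⪯₁ if and only if ⪯₂ belongs to the closure of the singleton {⪯₁} in the Zariski topology on the set of left-invariant preorders on G. (The refinement order is the specialization order of the Zariski topology.) -/

import Mathlib

/-- A left-invariant preorder on a group `G`: a total, transitive, left-invariant
binary relation. -/
def IsLeftInvPreorder {G : Type*} [Group G] (r : G → G → Prop) : Prop :=
  (∀ u v, r u v ∨ r v u) ∧ (∀ u v w, r u v → r v w → r u w) ∧
    (∀ u v w, r u v → r (w * u) (w * v))

/-- The space of left-invariant preorders on `G`. -/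
def ZRl (G : Type*) [Group G] : Type _ := {r : G → G → Prop // IsLeftInvPreorder r}

/-- The Zariski topology on `ZRl G`, generated by the sets `O_u = {⪯ | 1 ⪯ u}`. -/
def zariskiTop (G : Type*) [Group G] : TopologicalSpace (ZRl G) :=
  TopologicalSpace.generateFrom {s : Set (ZRl G) | ∃ u : G, s = {p : ZRl G | p.1 1 u}}

theorem stmt5 {G : Type*} [Group G] (r₁ r₂ : G → G → Prop)
    (h₁ : IsLeftInvPreorder r₁) (h₂ : IsLeftInvPreorder r₂) :
    (∀ u v, r₂ u v → r₁ u v) ↔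
      (⟨r₂, h₂⟩ : ZRl G) ∈ @closure (ZRl G) (zariskiTop G) {(⟨r₁, h₁⟩ : ZRl G)} := by
  letI := zariskiTop G
  constructor
  · intro href
    apply (@mem_closure_iff _ (zariskiTop G) _ _).2
    intro o ho hmem
    refine ⟨⟨r₁, h₁⟩, ?_, rfl⟩
    -- show p₂ ∈ o → p₁ ∈ o by induction on generated opens
    have : ∀ s : Set (ZRl G), TopologicalSpace.GenerateOpen
        {s : Set (ZRl G) | ∃ u : G, s = {p : ZRl G | p.1 1 u}} s →
        (⟨r₂, h₂⟩ : ZRl G) ∈ s → (⟨r₁, h₁⟩ : ZRl G) ∈ s := by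
      intro s hs
      induction hs with
      | basic t ht => obtain ⟨u, rfl⟩ := ht; exact fun h => href 1 u h
      | univ => exact fun _ => trivial
      | inter t₁ t₂ _ _ ih₁ ih₂ => exact fun h => ⟨ih₁ h.1, ih₂ h.2⟩
      | sUnion S _ ih => rintro ⟨t, ht, hmem⟩; exact ⟨t, ht, ih t ht hmem⟩
    exact this o ho hmem
  · intro hcl u v huv
    have key : r₂ 1 (u⁻¹ * v) → r₁ 1 (u⁻¹ * v) := by
      intro h
      have hopen : @IsOpen _ (zariskiTop G) {p : ZRl G | p.1 1 (u⁻¹ * v)} :=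
        TopologicalSpace.GenerateOpen.basic _ ⟨u⁻¹ * v, rfl⟩
      replace hcl := (@mem_closure_iff _ (zariskiTop G) _ _).1 hcl
      obtain ⟨q, hq, hq1⟩ := hcl _ hopen h
      replace hq1 := (Set.mem_singleton_iff (a := q) (b := (⟨r₁, h₁⟩ : ZRl G))).1 hq1
      rw [hq1] at hq
      exact hq
    have h2 : r₂ 1 (u⁻¹ * v) := by
      have := h₂.2.2 u v u⁻¹ huv
      simpa using this
    have := h₁.2.2 1 (u⁻¹ * v) u (key h2)
    simpa using this
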